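/- arXiv:1602.07828 — 15 statements merged into one kernel-verified Lean document; each statement's English description precedes it below -/
import Mathlib

section
/- Let (A, ∧, ∼, ∽, 1) be a pseudo equality algebra. Then for all x, y ∈ A: (1) x ≤ ((x∧y) ∼ x) ∽ y and x ≤ y ∼ (x ∽ (x∧y)); (2) y ≤ ((x∧y) ∼ x) ∽ y and y ≤ y ∼ (x ∽ (x∧y)); (3) x ∼ y ≤ (x∧y) ∼ y and x ∽ y ≤ x ∽ (x∧y). -/
/-- A pseudo equality algebra (JK-algebra): a meet-semilattice with top element `⊤`
(playing the role of `1`) equipped with two equality operations `sim` (`∼`) and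
`bsim` (`∽`) satisfying axioms (A2)–(A7). -/
class PseudoEqualityAlgebra (A : Type*) extends SemilatticeInf A, OrderTop A where
  sim : A → A → A
  bsim : A → A → A
  sim_self : ∀ x : A, sim x x = ⊤
  bsim_self : ∀ x : A, bsim x x = ⊤
  sim_top : ∀ x : A, sim x ⊤ = x
  top_bsim : ∀ x : A, bsim ⊤ x = x
  A4a : ∀ x y z : A, x ≤ y → y ≤ z → sim x z ≤ sim y z
  A4b : ∀ x y z : A, x ≤ y → y ≤ z → sim x z ≤ sim x y
  A4c : ∀ x y z : A, x ≤ y → y ≤ z → bsim z x ≤ bsim z y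
  A4d : ∀ x y z : A, x ≤ y → y ≤ z → bsim z x ≤ bsim y x
  A5a : ∀ x y z : A, sim x y ≤ sim (x ⊓ z) (y ⊓ z)
  A5b : ∀ x y z : A, bsim x y ≤ bsim (x ⊓ z) (y ⊓ z)
  A6a : ∀ x y z : A, sim x y ≤ bsim (sim z x) (sim z y)
  A6b : ∀ x y z : A, bsim x y ≤ sim (bsim x z) (bsim y z)
  A7a : ∀ x y z : A, sim x y ≤ sim (sim x z) (sim y z)
  A7b : ∀ x y z : A, bsim x y ≤ bsim (bsim z x) (bsim z y)

open PseudoEqualityAlgebra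

/-- Proposition 2.3 (3)–(5): in any pseudo equality algebra,
(1) `x ≤ ((x∧y) ∼ x) ∽ y` and `x ≤ y ∼ (x ∽ (x∧y))`;
(2) `y ≤ ((x∧y) ∼ x) ∽ y` and `y ≤ y ∼ (x ∽ (x∧y))`;
(3) `x ∼ y ≤ (x∧y) ∼ y` and `x ∽ y ≤ x ∽ (x∧y)`. -/
theorem stmt0 {A : Type*} [PseudoEqualityAlgebra A] (x y : A) :
    (x ≤ bsim (sim (x ⊓ y) x) y ∧ x ≤ sim y (bsim x (x ⊓ y))) ∧
    (y ≤ bsim (sim (x ⊓ y) x) y ∧ y ≤ sim y (bsim x (x ⊓ y))) ∧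
    (sim x y ≤ sim (x ⊓ y) y ∧ bsim x y ≤ bsim x (x ⊓ y)) := by
  -- y ≤ sim (x⊓y) x
  have hy1 : y ≤ sim (x ⊓ y) x := by
    have := A5a y ⊤ x
    rwa [sim_top, inf_comm y x, top_inf_eq] at this
  -- y ≤ bsim x (x⊓y)
  have hy2 : y ≤ bsim x (x ⊓ y) := by
    have := A5b ⊤ y x
    rwa [top_bsim, top_inf_eq, inf_comm y x] at this
  refine ⟨⟨?_, ?_⟩, ⟨?_, ?_⟩, ?_, ?_⟩
  · -- x ≤ bsim (sim (x⊓y) x) y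
    have h1 : x ≤ bsim (sim (x ⊓ y) x) (x ⊓ y) := by
      have := A6a x ⊤ (x ⊓ y)
      rwa [sim_top, sim_top] at this
    exact le_trans h1 (A4c (x ⊓ y) y (sim (x ⊓ y) x) inf_le_right hy1)
  · -- x ≤ sim y (bsim x (x⊓y))
    have h1 : x ≤ sim (x ⊓ y) (bsim x (x ⊓ y)) := by
      have := A6b ⊤ x (x ⊓ y)
      rwa [top_bsim, top_bsim] at this
    exact le_trans h1 (A4a (x ⊓ y) y (bsim x (x ⊓ y)) inf_le_right hy2)
  · -- y ≤ bsim (sim (x⊓y) x) y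
    have := A4d y (sim (x ⊓ y) x) ⊤ hy1 le_top
    rwa [top_bsim] at this
  · -- y ≤ sim y (bsim x (x⊓y))
    have := A4b y (bsim x (x ⊓ y)) ⊤ hy2 le_top
    rwa [sim_top] at this
  · have := A5a x y y
    rwa [inf_idem] at this
  · have := A5b x y x
    rwa [inf_idem, inf_comm y x] at this
end

section
/- Let (A, ∧, ∼, ∽, 1) be a pseudo equality algebra and let x, y ∈ A with x ≤ y. Then for all z ∈ A: (1) (y∧z) ∼ y ≤ (x∧z) ∼ x and y ∽ (y∧z) ≤ x ∽ (x∧z); (2) (z∧x) ∼ z ≤ (z∧y) ∼ z and z ∽ (z∧x) ≤ z ∽ (z∧y). -/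
open PseudoEqualityAlgebra

/-- Proposition 2.4: in a pseudo equality algebra, if `x ≤ y` then for all `z`:
(1) `(y∧z) ∼ y ≤ (x∧z) ∼ x` and `y ∽ (y∧z) ≤ x ∽ (x∧z)`;
(2) `(z∧x) ∼ z ≤ (z∧y) ∼ z` and `z ∽ (z∧x) ≤ z ∽ (z∧y)`. -/
theorem stmt1 {A : Type*} [PseudoEqualityAlgebra A] (x y : A) (hxy : x ≤ y) (z : A) :
    (sim (y ⊓ z) y ≤ sim (x ⊓ z) x ∧ bsim y (y ⊓ z) ≤ bsim x (x ⊓ z)) ∧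
    (sim (z ⊓ x) z ≤ sim (z ⊓ y) z ∧ bsim z (z ⊓ x) ≤ bsim z (z ⊓ y)) := by
  have h1 : (y ⊓ z) ⊓ x = x ⊓ z := by
    rw [inf_right_comm, inf_eq_right.mpr hxy, inf_comm]
  have h2 : y ⊓ x = x := inf_eq_right.mpr hxy
  refine ⟨⟨?_, ?_⟩, ?_, ?_⟩
  · have := A5a (y ⊓ z) y x; rwa [h1, h2] at this
  · have := A5b y (y ⊓ z) x; rwa [h1, h2] at this
  · exact A4a _ _ _ (inf_le_inf_left z hxy) inf_le_left
  · exact A4c _ _ _ (inf_le_inf_left z hxy) inf_le_left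
end

section
/- Let (A, ∧, ∼, ∽, 1) be a pseudo equality algebra. Then for all x, y ∈ A: (1) y ∼ (((x∧y) ∼ x) ∽ y) = (x∧y) ∼ x; (2) (y ∼ (x ∽ (x∧y))) ∽ y = x ∽ (x∧y). -/
open PseudoEqualityAlgebra

/-- Proposition 2.5: in any pseudo equality algebra,
(1) `y ∼ (((x∧y) ∼ x) ∽ y) = (x∧y) ∼ x`;
(2) `(y ∼ (x ∽ (x∧y))) ∽ y = x ∽ (x∧y)`. -/
theorem stmt2 {A : Type*} [PseudoEqualityAlgebra A] (x y : A) :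
    sim y (bsim (sim (x ⊓ y) x) y) = sim (x ⊓ y) x ∧
    bsim (sim y (bsim x (x ⊓ y))) y = bsim x (x ⊓ y) := by
  -- General lemma: w ≤ (z ∼ w) ∽ z
  have h1 : ∀ w z : A, w ≤ bsim (sim z w) z := by
    intro w z
    have h := A6a w ⊤ z
    simpa [sim_top] using h
  -- General lemma: q ≤ z ∼ (q ∽ z)
  have h2 : ∀ q z : A, q ≤ sim z (bsim q z) := by
    intro q z
    have h := A6b ⊤ q z
    simpa [top_bsim] using h
  constructor
  · set a := sim (x ⊓ y) x with ha
    -- y ≤ a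
    have hya : y ≤ a := by
      have h := A5a y ⊤ x
      simpa [sim_top, inf_comm] using h
    -- x ≤ a ∽ y
    have hxb : x ≤ bsim a y := by
      have h3 : x ≤ bsim a (x ⊓ y) := h1 x (x ⊓ y)
      exact h3.trans (A4c (x ⊓ y) y a inf_le_right hya)
    -- upper bound
    have hle : sim y (bsim a y) ≤ a := by
      have h := A5a y (bsim a y) x
      have e1 : bsim a y ⊓ x = x := inf_eq_right.2 hxb
      rw [e1, inf_comm y x] at h
      exact h
    -- lower bound
    have hge : a ≤ sim y (bsim a y) := h2 a y
    exact le_antisymm hle hge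
  · set b := bsim x (x ⊓ y) with hb
    -- y ≤ b
    have hyb : y ≤ b := by
      have h := A5b ⊤ y x
      simpa [top_bsim, inf_comm] using h
    -- x ≤ y ∼ b
    have hxs : x ≤ sim y b := by
      have h3 : x ≤ sim (x ⊓ y) b := h2 x (x ⊓ y)
      exact h3.trans (A4a (x ⊓ y) y b inf_le_right hyb)
    -- upper bound
    have hle : bsim (sim y b) y ≤ b := by
      have h := A5b (sim y b) y x
      have e1 : sim y b ⊓ x = x := inf_eq_right.2 hxs
      rw [e1, inf_comm y x] at h
      exact h
    -- lower bound
    have hge : b ≤ bsim (sim y b) y := h1 b y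
    exact le_antisymm hle hge
end

section
/- Let (B, ∧, →, ⇝, 1) be a pseudo BCK(pD)-meet-semilattice and let D be a deductive system of B. Then D is a subalgebra of B: 1 ∈ D, and for all x, y ∈ D one has x ∧ y ∈ D, x → y ∈ D, and x ⇝ y ∈ D. -/
/-- A pseudo BCK-meet-semilattice: a meet-semilattice with top element `⊤`
(playing the role of `1`) equipped with two implications `imp` (`→`) and `limp` (`⇝`)
satisfying the pseudo BCK axioms; (B3), (B4), (B5) are built into the order structure. -/
class PseudoBCKMeetSemilattice (B : Type*) extends SemilatticeInf B, OrderTop B where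
  imp : B → B → B
  limp : B → B → B
  B1a : ∀ x y z : B, imp x y ≤ limp (imp y z) (imp x z)
  B1b : ∀ x y z : B, limp x y ≤ imp (limp y z) (limp x z)
  B2a : ∀ x y : B, x ≤ limp (imp x y) y
  B2b : ∀ x y : B, x ≤ imp (limp x y) y
  le_iff_imp : ∀ x y : B, x ≤ y ↔ imp x y = ⊤
  le_iff_limp : ∀ x y : B, x ≤ y ↔ limp x y = ⊤

open PseudoBCKMeetSemilattice

/-- A deductive system of a pseudo BCK-meet-semilattice. -/
def IsDeductiveSystem {B : Type*} [PseudoBCKMeetSemilattice B] (D : Set B) : Prop :=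
  ⊤ ∈ D ∧ ∀ x y : B, x ∈ D → imp x y ∈ D → y ∈ D

section Aux
variable {B : Type*} [PseudoBCKMeetSemilattice B]

lemma imp_top' (x : B) : imp x (⊤ : B) = ⊤ := (le_iff_imp x ⊤).1 le_top

lemma limp_top' (x : B) : limp x (⊤ : B) = ⊤ := (le_iff_limp x ⊤).1 le_top

lemma limp_top_eq (y : B) : limp (⊤ : B) y = y := by
  have h1 : y ≤ limp (⊤ : B) y := by
    have := B2a y y
    rwa [(le_iff_imp y y).1 le_rfl] at this
  have h2 : limp (⊤ : B) y ≤ y := by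
    have := B2b (⊤ : B) y
    exact (le_iff_imp _ _).2 (le_antisymm le_top this)
  exact le_antisymm h2 h1

lemma imp_top_eq (y : B) : imp (⊤ : B) y = y := by
  have h1 : y ≤ imp (⊤ : B) y := by
    have := B2b y y
    rwa [(le_iff_limp y y).1 le_rfl] at this
  have h2 : imp (⊤ : B) y ≤ y := by
    have := B2a (⊤ : B) y
    exact (le_iff_limp _ _).2 (le_antisymm le_top this)
  exact le_antisymm h2 h1

lemma le_imp_self (x y : B) : y ≤ imp x y := by
  have h := B1a x ⊤ y
  rw [imp_top', imp_top_eq] at h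
  exact (le_iff_limp _ _).2 (le_antisymm le_top h)

lemma le_limp_self (x y : B) : y ≤ limp x y := by
  have h := B1b x ⊤ y
  rw [limp_top', limp_top_eq] at h
  exact (le_iff_imp _ _).2 (le_antisymm le_top h)

lemma mem_of_le {D : Set B} (hD : IsDeductiveSystem D) {x y : B}
    (hx : x ∈ D) (hxy : x ≤ y) : y ∈ D := by
  refine hD.2 x y hx ?_
  rw [(le_iff_imp x y).1 hxy]
  exact hD.1

end Aux

/-- Lemma 2.8: every deductive system of a pseudo BCK(pD)-meet-semilattice `B` is a
subalgebra of `B`: `1 ∈ D`, and `D` is closed under `∧`, `→` and `⇝`. -/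
theorem stmt3 {B : Type*} [PseudoBCKMeetSemilattice B]
    (hpD1 : ∀ x y z : B, imp x (y ⊓ z) = imp x y ⊓ imp x z)
    (hpD2 : ∀ x y z : B, limp x (y ⊓ z) = limp x y ⊓ limp x z)
    (D : Set B) (hD : IsDeductiveSystem D) :
    ⊤ ∈ D ∧ ∀ x ∈ D, ∀ y ∈ D, x ⊓ y ∈ D ∧ imp x y ∈ D ∧ limp x y ∈ D := by
  refine ⟨hD.1, fun x hx y hy => ⟨?_, ?_, ?_⟩⟩
  · have key : imp x (x ⊓ y) = imp x y := by
      rw [hpD1, (le_iff_imp x x).1 le_rfl, top_inf_eq]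
    have hmem : imp x (x ⊓ y) ∈ D := by
      rw [key]; exact mem_of_le hD hy (le_imp_self x y)
    exact hD.2 x (x ⊓ y) hx hmem
  · exact mem_of_le hD hy (le_imp_self x y)
  · exact mem_of_le hD hy (le_limp_self x y)
end

section
/- Every pseudo BCK(pD)-meet-semilattice is a pseudo BCK(pC)-meet-semilattice; that is, if (B, ∧, →, ⇝, 1) is a pseudo BCK-meet-semilattice satisfying x → (y∧z) = (x → y) ∧ (x → z) and x ⇝ (y∧z) = (x ⇝ y) ∧ (x ⇝ z) for all x, y, z ∈ B, then x → y ≤ (x∧z) → (y∧z) and x ⇝ y ≤ (x∧z) ⇝ (y∧z) for all x, y, z ∈ B. -/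
open PseudoBCKMeetSemilattice

lemma imp_anti {B : Type*} [PseudoBCKMeetSemilattice B] {x y : B} (h : x ≤ y) (z : B) :
    imp y z ≤ imp x z := by
  have h1 : imp x y = ⊤ := (le_iff_imp x y).mp h
  have h2 : limp (imp y z) (imp x z) = ⊤ :=
    le_antisymm le_top (h1 ▸ B1a x y z)
  exact (le_iff_limp _ _).mpr h2

lemma limp_anti {B : Type*} [PseudoBCKMeetSemilattice B] {x y : B} (h : x ≤ y) (z : B) :
    limp y z ≤ limp x z := by
  have h1 : limp x y = ⊤ := (le_iff_limp x y).mp h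
  have h2 : imp (limp y z) (limp x z) = ⊤ :=
    le_antisymm le_top (h1 ▸ B1b x y z)
  exact (le_iff_imp _ _).mpr h2

/-- Proposition 2.10: every pseudo BCK(pD)-meet-semilattice is a
pseudo BCK(pC)-meet-semilattice. -/
theorem stmt4 {B : Type*} [PseudoBCKMeetSemilattice B]
    (hpD1 : ∀ x y z : B, imp x (y ⊓ z) = imp x y ⊓ imp x z)
    (hpD2 : ∀ x y z : B, limp x (y ⊓ z) = limp x y ⊓ limp x z) :
    ∀ x y z : B, imp x y ≤ imp (x ⊓ z) (y ⊓ z) ∧ limp x y ≤ limp (x ⊓ z) (y ⊓ z) := by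
  intro x y z
  have hz1 : imp (x ⊓ z) z = ⊤ := (le_iff_imp _ _).mp inf_le_right
  have hz2 : limp (x ⊓ z) z = ⊤ := (le_iff_limp _ _).mp inf_le_right
  constructor
  · rw [hpD1, hz1, inf_top_eq]
    exact imp_anti inf_le_left y
  · rw [hpD2, hz2, inf_top_eq]
    exact limp_anti inf_le_left y
end

section
/- A pseudo equality algebra (A, ∧, ∼, ∽, 1) is invariant if and only if (x∧y) ∼ y = x ∼ y and x ∽ (x∧y) = x ∽ y for all x, y ∈ A. -/
open PseudoEqualityAlgebra

/-- A pair of binary operations `(imp, limp)` makes an ordered set with top into a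
pseudo BCK-meet-semilattice (axioms (B1), (B2), (B6); (B3)–(B5) hold by the order). -/
def IsPseudoBCKPair {A : Type*} [SemilatticeInf A] [OrderTop A]
    (imp limp : A → A → A) : Prop :=
  (∀ x y z : A, imp x y ≤ limp (imp y z) (imp x z)) ∧
  (∀ x y z : A, limp x y ≤ imp (limp y z) (limp x z)) ∧
  (∀ x y : A, x ≤ limp (imp x y) y) ∧
  (∀ x y : A, x ≤ imp (limp x y) y) ∧
  (∀ x y : A, x ≤ y ↔ imp x y = ⊤) ∧
  (∀ x y : A, x ≤ y ↔ limp x y = ⊤)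

/-- A pseudo equality algebra `A` is invariant if there is a pseudo BCK-meet-semilattice
structure `(imp, limp)` on the same meet-semilattice such that `Φ` of it gives back `A`,
i.e. `x ∼ y = imp y x` and `x ∽ y = limp x y`. -/
def Invariant (A : Type*) [PseudoEqualityAlgebra A] : Prop :=
  ∃ imp limp : A → A → A, IsPseudoBCKPair imp limp ∧
    (∀ x y : A, sim x y = imp y x) ∧ (∀ x y : A, bsim x y = limp x y)

/-- Proposition 2.15: a pseudo equality algebra is invariant iff
`(x∧y) ∼ y = x ∼ y` and `x ∽ (x∧y) = x ∽ y` for all `x, y`. -/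
theorem stmt6 {A : Type*} [PseudoEqualityAlgebra A] :
    Invariant A ↔
      ∀ x y : A, sim (x ⊓ y) y = sim x y ∧ bsim x (x ⊓ y) = bsim x y := by
  constructor
  · rintro ⟨imp, limp, ⟨B1, B2, B3, B4, B5, B6⟩, hs, hb⟩
    have himp_top : ∀ w : A, imp ⊤ w ≤ w := fun w =>
      (B6 _ _).2 (top_unique (B3 ⊤ w))
    have hlimp_top : ∀ w : A, limp ⊤ w ≤ w := fun w =>
      (B5 _ _).2 (top_unique (B4 ⊤ w))
    have himp_mono : ∀ z a b : A, a ≤ b → imp z a ≤ imp z b := fun z a b h =>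
      (B1 z a b).trans (by rw [(B5 a b).1 h]; exact hlimp_top _)
    have hlimp_mono : ∀ z a b : A, a ≤ b → limp z a ≤ limp z b := fun z a b h =>
      (B2 z a b).trans (by rw [(B6 a b).1 h]; exact himp_top _)
    intro x y
    constructor
    · apply le_antisymm
      · rw [hs, hs]; exact himp_mono y _ _ inf_le_left
      · simpa using A5a x y y
    · apply le_antisymm
      · rw [hb, hb]; exact hlimp_mono x _ _ inf_le_right
      · simpa [inf_comm] using A5b x y x
  · intro H
    refine ⟨fun x y => sim y x, fun x y => bsim x y,
      ⟨fun x y z => A6a y x z, fun x y z => A6b x y z,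
       fun x y => by simpa [sim_top] using A6a x ⊤ y,
       fun x y => by simpa [top_bsim] using A6b ⊤ x y,
       fun x y => ?_, fun x y => ?_⟩,
      fun x y => rfl, fun x y => rfl⟩
    · constructor
      · intro h
        have h1 := (H y x).1
        rw [inf_eq_right.2 h, sim_self] at h1
        exact h1.symm
      · intro h
        replace h : sim y x = ⊤ := h
        have h2 : x ≤ bsim (sim y x) y := by simpa [sim_top] using A6a x ⊤ y
        rwa [h, top_bsim] at h2
    · constructor
      · intro h
        have h1 := (H x y).2
        rw [inf_eq_left.2 h, bsim_self] at h1
        exact h1.symm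
      · intro h
        replace h : bsim x y = ⊤ := h
        have h2 : x ≤ sim y (bsim x y) := by simpa [top_bsim] using A6b ⊤ x y
        rwa [h, sim_top] at h2
end

section
/- Let (A, ∧, ∼, ∽, a, 1) be a pointed pseudo equality algebra. Then for all x, y ∈ A: (1) x ≤ x^{∼a ∽a} and x ≤ x^{∽a ∼a}; (2) x ∼ y ≤ x^{∼a} ∽ y^{∼a} ≤ x^{∼a ∽a} ∼ y^{∼a ∽a} and x ∽ y ≤ x^{∽a} ∼ y^{∽a} ≤ x^{∽a ∼a} ∽ y^{∽a ∼a}. -/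
open PseudoEqualityAlgebra

/-- Proposition 4.3 (3)–(4): in a pointed pseudo equality algebra `(A, ∧, ∼, ∽, a, 1)`,
with `x^{∼a} = a ∼ x` and `x^{∽a} = x ∽ a`:
(1) `x ≤ x^{∼a ∽a}` and `x ≤ x^{∽a ∼a}`;
(2) `x ∼ y ≤ x^{∼a} ∽ y^{∼a} ≤ x^{∼a ∽a} ∼ y^{∼a ∽a}` and
    `x ∽ y ≤ x^{∽a} ∼ y^{∽a} ≤ x^{∽a ∼a} ∽ y^{∽a ∼a}`. -/
theorem stmt7 {A : Type*} [PseudoEqualityAlgebra A] (a x y : A) :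
    (x ≤ bsim (sim a x) a ∧ x ≤ sim a (bsim x a)) ∧
    (sim x y ≤ bsim (sim a x) (sim a y) ∧
      bsim (sim a x) (sim a y) ≤ sim (bsim (sim a x) a) (bsim (sim a y) a)) ∧
    (bsim x y ≤ sim (bsim x a) (bsim y a) ∧
      sim (bsim x a) (bsim y a) ≤ bsim (sim a (bsim x a)) (sim a (bsim y a))) := by
  refine ⟨⟨?_, ?_⟩, ⟨A6a x y a, A6b (sim a x) (sim a y) a⟩, ⟨A6b x y a, A6a (bsim x a) (bsim y a) a⟩⟩
  · have h := A6a x ⊤ a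
    rwa [sim_top, sim_top] at h
  · have h := A6b ⊤ x a
    rwa [top_bsim, top_bsim] at h
end

section
/- Let (A, ∧, ∼, ∽, a, 1) be a pointed a-compatible pseudo equality algebra. Then the map γ: A → A defined by γ(x) = x^{∼a ∽a} is a closure operator on A: (i) x ≤ γ(x) for all x; (ii) x ≤ y implies γ(x) ≤ γ(y); (iii) γ(γ(x)) = γ(x) for all x. -/
open PseudoEqualityAlgebra

/-- Proposition 4.12: if `(A, ∧, ∼, ∽, a, 1)` is a pointed `a`-compatible pseudo equality
algebra (i.e. `(∼a,∽a)`-good and satisfying (C1)–(C4), where `x^{∼a} = a ∼ x` and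
`x^{∽a} = x ∽ a`), then `γ(x) = x^{∼a ∽a}` is a closure operator on `A`:
it is extensive, monotone and idempotent. -/
theorem stmt9 {A : Type*} [PseudoEqualityAlgebra A] (a : A)
    (hgood : ∀ x : A, bsim (sim a x) a = sim a (bsim x a))
    (hC1 : ∀ x y : A,
      bsim (sim a (sim x y)) a = sim (bsim (sim a x) a) (bsim (sim a y) a))
    (hC2 : ∀ x y : A,
      bsim (sim a (bsim x y)) a = bsim (bsim (sim a x) a) (bsim (sim a y) a))
    (hC3 : ∀ x y : A,
      bsim (sim a (x ⊓ y)) a = bsim (sim a x) a ⊓ bsim (sim a y) a)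
    (hC4a : ∀ x : A, sim a (bsim (sim a x) a) = sim a x)
    (hC4b : ∀ x : A, bsim (sim a (bsim x a)) a = bsim x a) :
    (∀ x : A, x ≤ bsim (sim a x) a) ∧
    (∀ x y : A, x ≤ y → bsim (sim a x) a ≤ bsim (sim a y) a) ∧
    (∀ x : A, bsim (sim a (bsim (sim a x) a)) a = bsim (sim a x) a) := by
  refine ⟨fun x => ?_, fun x y hxy => ?_, fun x => ?_⟩
  · have h := A6a (A := A) x ⊤ a
    rwa [sim_top, sim_top] at h
  · have h : x ⊓ y = x := inf_eq_left.mpr hxy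
    have h3 := hC3 x y
    rw [h] at h3
    rw [h3]
    exact inf_le_right
  · rw [hC4a]
end

section
/- Let (A, ∧, ∼, ∽, a, 1) be a pointed pseudo equality algebra with a ≠ 1 and let s be a Bosbach state on A. Then: (1) for all x, y ∈ A with x ≤ y, s(x ∼ y) = s(y ∽ x) = 1 + s(x) − s(y) and s(x) ≤ s(y); (2) for all x ≤ a, s(x) = 0 and s(x ∼ a) = s(a ∽ x) = 1; (3) for all x ≥ a, s(x^{∼a}) = s(x^{∽a}) = 1 − s(x) and s(x^{∼a ∽a}) = s(x^{∽a ∼a}) = s(x). -/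
open PseudoEqualityAlgebra

/-- A Bosbach state on a pointed pseudo equality algebra `(A, ∧, ∼, ∽, a, 1)`:
a function `s : A → [0,1] ⊆ ℝ` satisfying (BS1), (BS2) and (BS3). -/
def IsBosbachState {A : Type*} [PseudoEqualityAlgebra A] (a : A) (s : A → ℝ) : Prop :=
  (∀ x : A, s x ∈ Set.Icc (0 : ℝ) 1) ∧
  (∀ x y : A, s x + s (sim (x ⊓ y) x) = s y + s (sim (x ⊓ y) y)) ∧
  (∀ x y : A, s x + s (bsim x (x ⊓ y)) = s y + s (bsim y (x ⊓ y))) ∧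
  s (⊤ : A) = 1 ∧ s a = 0

/-- Proposition 5.2: let `s` be a Bosbach state on a pointed pseudo equality algebra
`(A, ∧, ∼, ∽, a, 1)` with `a ≠ 1`. Then:
(1) for `x ≤ y`, `s(x ∼ y) = s(y ∽ x) = 1 + s(x) − s(y)` and `s(x) ≤ s(y)`;
(2) for `x ≤ a`, `s(x) = 0` and `s(x ∼ a) = s(a ∽ x) = 1`;
(3) for `a ≤ x`, `s(x^{∼a}) = s(x^{∽a}) = 1 − s(x)` and
    `s(x^{∼a ∽a}) = s(x^{∽a ∼a}) = s(x)`. -/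
theorem stmt10 {A : Type*} [PseudoEqualityAlgebra A] (a : A) (ha : a ≠ ⊤)
    (s : A → ℝ) (hs : IsBosbachState a s) :
    (∀ x y : A, x ≤ y →
      s (sim x y) = 1 + s x - s y ∧ s (bsim y x) = 1 + s x - s y ∧ s x ≤ s y) ∧
    (∀ x : A, x ≤ a → s x = 0 ∧ s (sim x a) = 1 ∧ s (bsim a x) = 1) ∧
    (∀ x : A, a ≤ x →
      (s (sim a x) = 1 - s x ∧ s (bsim x a) = 1 - s x) ∧
      (s (bsim (sim a x) a) = s x ∧ s (sim a (bsim x a)) = s x)) := by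

  obtain ⟨hbd, hbs1, hbs2, htop, hsa⟩ := hs
  have part1 : ∀ x y : A, x ≤ y →
      s (sim x y) = 1 + s x - s y ∧ s (bsim y x) = 1 + s x - s y ∧ s x ≤ s y := by
    intro x y hxy
    have hinf : x ⊓ y = x := inf_eq_left.mpr hxy
    have h1 := hbs1 x y
    have h2 := hbs2 x y
    rw [hinf, sim_self, htop] at h1
    rw [hinf, bsim_self, htop] at h2
    have e1 : s (sim x y) = 1 + s x - s y := by linarith
    have e2 : s (bsim y x) = 1 + s x - s y := by linarith
    refine ⟨e1, e2, ?_⟩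
    have := (hbd (sim x y)).2
    linarith
  refine ⟨part1, ?_, ?_⟩
  · intro x hx
    obtain ⟨e1, e2, _⟩ := part1 x a hx
    rw [hsa] at e1 e2
    have h1 := (hbd (sim x a)).2
    have h2 := (hbd x).1
    have : s x = 0 := by linarith
    exact ⟨this, by rw [e1, this]; ring, by rw [e2, this]; ring⟩
  · intro x hx
    obtain ⟨e1, e2, _⟩ := part1 a x hx
    rw [hsa] at e1 e2
    have e1' : s (sim a x) = 1 - s x := by linarith
    have e2' : s (bsim x a) = 1 - s x := by linarith
    have ha1 : a ≤ sim a x := by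
      have := A4b a x ⊤ hx le_top
      rwa [sim_top] at this
    have ha2 : a ≤ bsim x a := by
      have := A4d a x ⊤ hx le_top
      rwa [top_bsim] at this
    obtain ⟨_, f2, _⟩ := part1 a (sim a x) ha1
    obtain ⟨f1, _, _⟩ := part1 a (bsim x a) ha2
    rw [hsa, e1'] at f2
    rw [hsa, e2'] at f1
    exact ⟨⟨e1', e2'⟩, by linarith, by linarith⟩
end

section
/- Let (A, ∧, ∼, ∽, a, 1) be a pointed pseudo equality algebra with a ≠ 1 and let s: A → [0,1] be a function with s(a) = 0. Then s is a Bosbach state on A if and only if s(y ∼ x) = s(x ∽ y) = 1 − s(x) + s(y) for all x, y ∈ A with y ≤ x. -/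
open PseudoEqualityAlgebra

/-- Proposition 5.3: let `(A, ∧, ∼, ∽, a, 1)` be a pointed pseudo equality algebra with
`a ≠ 1` and let `s : A → [0,1]` with `s(a) = 0`. Then `s` is a Bosbach state on `A` iff
`s(y ∼ x) = s(x ∽ y) = 1 − s(x) + s(y)` for all `y ≤ x`. -/
theorem stmt11 {A : Type*} [PseudoEqualityAlgebra A] (a : A) (ha : a ≠ ⊤)
    (s : A → ℝ) (hrange : ∀ x : A, s x ∈ Set.Icc (0 : ℝ) 1) (hsa : s a = 0) :
    IsBosbachState a s ↔
      ∀ x y : A, y ≤ x →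
        s (sim y x) = 1 - s x + s y ∧ s (bsim x y) = 1 - s x + s y := by
  constructor
  · rintro ⟨_, h1, h2, htop, _⟩ x y hyx
    have hinf : x ⊓ y = y := inf_eq_right.mpr hyx
    have e1 := h1 x y
    have e2 := h2 x y
    rw [hinf, sim_self, htop] at e1
    rw [hinf, bsim_self, htop] at e2
    constructor <;> linarith
  · intro h
    have htop : s (⊤ : A) = 1 := by
      have := (h ⊤ ⊤ le_rfl).1
      rw [sim_self] at this; linarith
    refine ⟨hrange, ?_, ?_, htop, hsa⟩
    · intro x y
      have hx := (h x (x ⊓ y) inf_le_left).1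
      have hy := (h y (x ⊓ y) inf_le_right).1
      linarith
    · intro x y
      have hx := (h x (x ⊓ y) inf_le_left).2
      have hy := (h y (x ⊓ y) inf_le_right).2
      linarith
end

section
/- Let (A, ∧, ∼, ∽, 1) be a pseudo equality algebra and let σ: A → A be an internal state of type I or of type II on A. Then: (1) σ(1) = 1; (2) σ(σ(x)) = σ(x) for all x ∈ A; (3) the image σ(A) equals the set of fixed points {x ∈ A : σ(x) = x}; (4) σ(A) is a subalgebra of A, i.e., 1 ∈ σ(A) and σ(A) is closed under ∼, ∽ and ∧. -/
open PseudoEqualityAlgebra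

/-- An internal state of type I on a pseudo equality algebra:
axioms (IS1), (IS2), (IS3), (IS4). -/
def IsInternalStateI {A : Type*} [PseudoEqualityAlgebra A] (σ : A → A) : Prop :=
  (∀ x y : A, x ≤ y → σ x ≤ σ y) ∧
  (∀ x y : A,
    σ (sim (x ⊓ y) x) = sim (σ y) (σ (bsim (sim (x ⊓ y) x) y)) ∧
    σ (bsim x (x ⊓ y)) = bsim (σ (sim y (bsim x (x ⊓ y)))) (σ y)) ∧
  (∀ x y : A,
    σ (sim (σ x) (σ y)) = sim (σ x) (σ y) ∧
    σ (bsim (σ x) (σ y)) = bsim (σ x) (σ y)) ∧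
  (∀ x y : A, σ (σ x ⊓ σ y) = σ x ⊓ σ y)

/-- An internal state of type II on a pseudo equality algebra:
axioms (IS1), (IS2'), (IS3), (IS4). -/
def IsInternalStateII {A : Type*} [PseudoEqualityAlgebra A] (σ : A → A) : Prop :=
  (∀ x y : A, x ≤ y → σ x ≤ σ y) ∧
  (∀ x y : A,
    σ (sim (x ⊓ y) x) = sim (σ y) (σ (bsim (sim (x ⊓ y) y) x)) ∧
    σ (bsim x (x ⊓ y)) = bsim (σ (sim x (bsim y (x ⊓ y)))) (σ y)) ∧
  (∀ x y : A,
    σ (sim (σ x) (σ y)) = sim (σ x) (σ y) ∧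
    σ (bsim (σ x) (σ y)) = bsim (σ x) (σ y)) ∧
  (∀ x y : A, σ (σ x ⊓ σ y) = σ x ⊓ σ y)

/-- Proposition 6.6: if `σ` is an internal state of type I or type II on a pseudo equality
algebra `A`, then (1) `σ(1) = 1`; (2) `σ(σ(x)) = σ(x)`; (3) `σ(A) = {x : σ(x) = x}`;
(4) `σ(A)` is a subalgebra of `A`. -/
theorem stmt13 {A : Type*} [PseudoEqualityAlgebra A] (σ : A → A)
    (hσ : IsInternalStateI σ ∨ IsInternalStateII σ) :
    σ (⊤ : A) = ⊤ ∧
    (∀ x : A, σ (σ x) = σ x) ∧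
    Set.range σ = {x : A | σ x = x} ∧
    ((⊤ : A) ∈ Set.range σ ∧
      ∀ x ∈ Set.range σ, ∀ y ∈ Set.range σ,
        sim x y ∈ Set.range σ ∧ bsim x y ∈ Set.range σ ∧ x ⊓ y ∈ Set.range σ) := by
  obtain ⟨h3, h4⟩ : (∀ x y : A,
      σ (sim (σ x) (σ y)) = sim (σ x) (σ y) ∧
      σ (bsim (σ x) (σ y)) = bsim (σ x) (σ y)) ∧
      (∀ x y : A, σ (σ x ⊓ σ y) = σ x ⊓ σ y) := by
    rcases hσ with ⟨_, _, h3, h4⟩ | ⟨_, _, h3, h4⟩ <;> exact ⟨h3, h4⟩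
  have htop : σ (⊤ : A) = ⊤ := by
    have := (h3 ⊤ ⊤).1
    rwa [sim_self] at this
  have hidem : ∀ x : A, σ (σ x) = σ x := by
    intro x
    have := (h3 x ⊤).1
    rwa [htop, sim_top] at this
  refine ⟨htop, hidem, ?_, ⟨⊤, htop⟩, ?_⟩
  · ext x
    constructor
    · rintro ⟨y, rfl⟩; exact hidem y
    · intro hx; exact ⟨x, hx⟩
  · rintro x ⟨a, rfl⟩ y ⟨b, rfl⟩
    exact ⟨⟨sim (σ a) (σ b), (h3 a b).1⟩, ⟨bsim (σ a) (σ b), (h3 a b).2⟩,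
      ⟨σ a ⊓ σ b, h4 a b⟩⟩
end

section
/- Let (A, ∧, ∼, ∽, 1) be a pseudo equality algebra, σ: A → A an internal state of type I or of type II on A, and x, y ∈ A with y ≤ x. Then: (1) σ(y ∼ x) ≤ σ(y) ∼ σ(x) and σ(x ∽ y) ≤ σ(x) ∽ σ(y); (2) σ(y) ∼ σ(x) = σ(x) → σ(y) and σ(x) ∽ σ(y) = σ(x) ⇝ σ(y); (3) for all u, v ∈ A (no order assumption), σ(u → v) ≤ σ(u) → σ(v) and σ(u ⇝ v) ≤ σ(u) ⇝ σ(v), where u → v = (u∧v) ∼ u and u ⇝ v = u ∽ (u∧v). -/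
open PseudoEqualityAlgebra

/-- Proposition 6.7: let `σ` be an internal state of type I or type II on a pseudo equality
algebra `A` and `y ≤ x`. Then
(1) `σ(y ∼ x) ≤ σ(y) ∼ σ(x)` and `σ(x ∽ y) ≤ σ(x) ∽ σ(y)`;
(2) `σ(y) ∼ σ(x) = σ(x) → σ(y)` and `σ(x) ∽ σ(y) = σ(x) ⇝ σ(y)`;
(3) for all `u, v`, `σ(u → v) ≤ σ(u) → σ(v)` and `σ(u ⇝ v) ≤ σ(u) ⇝ σ(v)`,
where `u → v = (u∧v) ∼ u` and `u ⇝ v = u ∽ (u∧v)`. -/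
theorem stmt14 {A : Type*} [PseudoEqualityAlgebra A] (σ : A → A)
    (hσ : IsInternalStateI σ ∨ IsInternalStateII σ)
    (x y : A) (hyx : y ≤ x) :
    (σ (sim y x) ≤ sim (σ y) (σ x) ∧ σ (bsim x y) ≤ bsim (σ x) (σ y)) ∧
    (sim (σ y) (σ x) = sim (σ x ⊓ σ y) (σ x) ∧
     bsim (σ x) (σ y) = bsim (σ x) (σ x ⊓ σ y)) ∧
    (∀ u v : A,
      σ (sim (u ⊓ v) u) ≤ sim (σ u ⊓ σ v) (σ u) ∧
      σ (bsim u (u ⊓ v)) ≤ bsim (σ u) (σ u ⊓ σ v)) := by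
  have aux1 : ∀ a b : A, a ≤ bsim (sim b a) b := by
    intro a b
    have h := A6a a ⊤ b
    rwa [sim_top, sim_top] at h
  have aux2 : ∀ a b : A, a ≤ sim b (bsim a b) := by
    intro a b
    have h := A6b ⊤ a b
    rwa [top_bsim, top_bsim] at h
  have mono : ∀ a b : A, a ≤ b → σ a ≤ σ b := hσ.elim (fun h => h.1) (fun h => h.1)
  have part1 : ∀ a b : A, b ≤ a →
      σ (sim b a) ≤ sim (σ b) (σ a) ∧ σ (bsim a b) ≤ bsim (σ a) (σ b) := by
    intro a b hba
    have hab : a ⊓ b = b := inf_eq_right.mpr hba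
    rcases hσ with ⟨_, is2, _, _⟩ | ⟨_, is2, _, _⟩
    · obtain ⟨h1, h2⟩ := is2 a b
      rw [hab] at h1 h2
      constructor
      · rw [h1]
        exact A4b (σ b) (σ a) (σ (bsim (sim b a) b)) (mono _ _ hba)
          (mono _ _ (aux1 a b))
      · rw [h2]
        exact A4d (σ b) (σ a) (σ (sim b (bsim a b))) (mono _ _ hba)
          (mono _ _ (aux2 a b))
    · obtain ⟨h1, h2⟩ := is2 a b
      rw [hab, sim_self, top_bsim] at h1
      rw [hab, bsim_self, sim_top] at h2
      exact ⟨le_of_eq h1, le_of_eq h2⟩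
  have hsy : σ x ⊓ σ y = σ y := inf_eq_right.mpr (mono _ _ hyx)
  refine ⟨part1 x y hyx, ⟨by rw [hsy], by rw [hsy]⟩, ?_⟩
  intro u v
  have h := part1 u (u ⊓ v) inf_le_left
  have hle : σ (u ⊓ v) ≤ σ u ⊓ σ v :=
    le_inf (mono _ _ inf_le_left) (mono _ _ inf_le_right)
  exact ⟨h.1.trans (A4a _ _ _ hle inf_le_left),
    h.2.trans (A4c _ _ _ hle inf_le_left)⟩
end

section
/- Let (A, ∧, ∼, ∽, 1) be a pseudo equality algebra and σ: A → A an internal state of type I or of type II on A, with kernel Ker(σ) = {x ∈ A : σ(x) = 1}. Then: (1) Ker(σ) ∩ σ(A) = {1}; (2) Ker(σ) is a deductive system of A; (3) if σ is strong, i.e., σ(x ∼ y) = σ(x ∽ y) for all x, y ∈ A, then Ker(σ) is a normal deductive system of A. -/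
open PseudoEqualityAlgebra

/-- A deductive system of a pseudo equality algebra. -/
def IsDeductiveSystemEq {A : Type*} [PseudoEqualityAlgebra A] (D : Set A) : Prop :=
  (⊤ : A) ∈ D ∧
  (∀ x y : A, x ∈ D → x ≤ y → y ∈ D) ∧
  (∀ x y : A, x ∈ D → sim y x ∈ D → y ∈ D)

/-- A normal deductive system of a pseudo equality algebra. -/
def IsNormalDeductiveSystemEq {A : Type*} [PseudoEqualityAlgebra A] (D : Set A) : Prop :=
  IsDeductiveSystemEq D ∧
  ∀ x y : A, (sim x y ∈ D ∧ sim y x ∈ D) ↔ (bsim y x ∈ D ∧ bsim x y ∈ D)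


open PseudoEqualityAlgebra in
private lemma peq_le_bsim_self {A : Type*} [PseudoEqualityAlgebra A] {a b : A}
    (h : a ≤ b) : a ≤ bsim b a := by
  have := A4d a b ⊤ h le_top
  rwa [top_bsim] at this

open PseudoEqualityAlgebra in
private lemma peq_le_sim_inf_left {A : Type*} [PseudoEqualityAlgebra A] (x y : A) :
    y ≤ sim (x ⊓ y) x := by
  have := A5a y ⊤ x
  rw [sim_top, top_inf_eq, inf_comm y x] at this
  exact this

open PseudoEqualityAlgebra in
private lemma peq_le_sim_inf_right {A : Type*} [PseudoEqualityAlgebra A] (x y : A) :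
    x ≤ sim (x ⊓ y) y := by
  have := A5a x ⊤ y
  rw [sim_top, top_inf_eq] at this
  exact this

open PseudoEqualityAlgebra in
private lemma peq_sim_le_sim_inf {A : Type*} [PseudoEqualityAlgebra A] (x y : A) :
    sim y x ≤ sim (x ⊓ y) x := by
  have := A5a y x x
  rw [inf_idem, inf_comm y x] at this
  exact this

open PseudoEqualityAlgebra in
private lemma peq_le_bsim_sim {A : Type*} [PseudoEqualityAlgebra A] (x y : A) :
    x ≤ bsim (sim (x ⊓ y) x) y := by
  have h1 : x ≤ bsim (sim (x ⊓ y) x) (x ⊓ y) := by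
    have := A6a x ⊤ (x ⊓ y)
    rw [sim_top, sim_top] at this
    exact this
  have h2 : bsim (sim (x ⊓ y) x) (x ⊓ y) ≤ bsim (sim (x ⊓ y) x) y :=
    A4c (x ⊓ y) y (sim (x ⊓ y) x) inf_le_right (peq_le_sim_inf_left x y)
  exact le_trans h1 h2

/-- Proposition 6.8: let `σ` be an internal state of type I or type II on a pseudo equality
algebra `A`. Then (1) `Ker(σ) ∩ σ(A) = {1}`; (2) `Ker(σ)` is a deductive system of `A`;
(3) if `σ` is strong then `Ker(σ)` is a normal deductive system of `A`. -/
theorem stmt15 {A : Type*} [PseudoEqualityAlgebra A] (σ : A → A)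
    (hσ : IsInternalStateI σ ∨ IsInternalStateII σ) :
    ({x : A | σ x = ⊤} ∩ Set.range σ = {(⊤ : A)}) ∧
    IsDeductiveSystemEq {x : A | σ x = ⊤} ∧
    ((∀ x y : A, σ (sim x y) = σ (bsim x y)) →
      IsNormalDeductiveSystemEq {x : A | σ x = ⊤}) := by
  -- extract common components
  have mono : ∀ x y : A, x ≤ y → σ x ≤ σ y := by
    rcases hσ with h | h
    · exact h.1
    · exact h.1
  have htop : σ ⊤ = ⊤ := by
    rcases hσ with h | h
    · have := (h.2.1 ⊤ ⊤).1
      simp only [inf_idem, sim_self, top_bsim] at this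
      exact this
    · have := (h.2.1 ⊤ ⊤).1
      simp only [inf_idem, sim_self, top_bsim] at this
      exact this
  have hidem : ∀ x : A, σ (σ x) = σ x := by
    intro x
    have h3 : σ (sim (σ x) (σ ⊤)) = sim (σ x) (σ ⊤) := by
      rcases hσ with h | h
      · exact (h.2.2.1 x ⊤).1
      · exact (h.2.2.1 x ⊤).1
    rw [htop, sim_top] at h3
    exact h3
  have htopmem : ∀ {s t : A}, σ s = ⊤ → s ≤ t → σ t = ⊤ := by
    intro s t hs hst
    have := mono s t hst
    rw [hs] at this
    exact top_unique this
  -- modus ponens closure of the kernel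
  have hmp : ∀ x y : A, σ x = ⊤ → σ (sim y x) = ⊤ → σ y = ⊤ := by
    intro x y hx hyx
    have hu : σ (sim (x ⊓ y) x) = ⊤ := htopmem hyx (peq_sim_le_sim_inf x y)
    rcases hσ with h | h
    · have heq := (h.2.1 x y).1
      have hb : σ (bsim (sim (x ⊓ y) x) y) = ⊤ := htopmem hx (peq_le_bsim_sim x y)
      rw [hu, hb, sim_top] at heq
      exact heq.symm
    · have heq := (h.2.1 x y).1
      have hb : σ (bsim (sim (x ⊓ y) y) x) = ⊤ :=
        htopmem hx (peq_le_bsim_self (peq_le_sim_inf_right x y))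
      rw [hu, hb, sim_top] at heq
      exact heq.symm
  refine ⟨?_, ⟨htop, ?_, ?_⟩, ?_⟩
  · ext z
    simp only [Set.mem_inter_iff, Set.mem_setOf_eq, Set.mem_range, Set.mem_singleton_iff]
    constructor
    · rintro ⟨hz, w, rfl⟩
      rw [← hz, hidem]
    · rintro rfl
      exact ⟨htop, ⊤, htop⟩
  · intro s t hs hst
    exact htopmem hs hst
  · intro s t hs hts
    exact hmp s t hs hts
  · intro hstrong
    refine ⟨⟨htop, fun s t hs hst => htopmem hs hst, fun s t hs hts => hmp s t hs hts⟩, ?_⟩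
    intro x y
    simp only [Set.mem_setOf_eq]
    rw [← hstrong y x, ← hstrong x y]
    tauto
end

section
/- Let (A, ∧, ∼, ∽, 1) be a pseudo equality algebra and let Ψ(A) = (A, ∧, →, ⇝, 1) be its associated pseudo BCK(pC)-meet-semilattice, where x → y = (x∧y) ∼ x and x ⇝ y = x ∽ (x∧y). If σ: A → A is an internal state of type I (respectively type II) on A, then σ is an internal state of type I (respectively type II) on Ψ(A), i.e., σ satisfies (SB1), (SB2) (respectively (SB2')), (SB3) and (SB4). -/
open PseudoEqualityAlgebra

/-- The implication `x → y = (x∧y) ∼ x` of the associated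
pseudo BCK(pC)-meet-semilattice `Ψ(A)`. -/
def pimp {A : Type*} [PseudoEqualityAlgebra A] (x y : A) : A := sim (x ⊓ y) x

/-- The implication `x ⇝ y = x ∽ (x∧y)` of the associated
pseudo BCK(pC)-meet-semilattice `Ψ(A)`. -/
def plimp {A : Type*} [PseudoEqualityAlgebra A] (x y : A) : A := bsim x (x ⊓ y)

/-- An internal state of type I on the pseudo BCK-meet-semilattice `Ψ(A)`:
axioms (SB1), (SB2), (SB3), (SB4). -/
def IsSBStateI {A : Type*} [PseudoEqualityAlgebra A] (μ : A → A) : Prop :=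
  (∀ x y : A, x ≤ y → μ x ≤ μ y) ∧
  (∀ x y : A,
    μ (pimp x y) = pimp (μ (plimp (pimp x y) y)) (μ y) ∧
    μ (plimp x y) = plimp (μ (pimp (plimp x y) y)) (μ y)) ∧
  (∀ x y : A,
    μ (pimp (μ x) (μ y)) = pimp (μ x) (μ y) ∧
    μ (plimp (μ x) (μ y)) = plimp (μ x) (μ y)) ∧
  (∀ x y : A, μ (μ x ⊓ μ y) = μ x ⊓ μ y)

/-- An internal state of type II on the pseudo BCK-meet-semilattice `Ψ(A)`:
axioms (SB1), (SB2'), (SB3), (SB4). -/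
def IsSBStateII {A : Type*} [PseudoEqualityAlgebra A] (μ : A → A) : Prop :=
  (∀ x y : A, x ≤ y → μ x ≤ μ y) ∧
  (∀ x y : A,
    μ (pimp x y) = pimp (μ (plimp (pimp y x) x)) (μ y) ∧
    μ (plimp x y) = plimp (μ (pimp (plimp y x) x)) (μ y)) ∧
  (∀ x y : A,
    μ (pimp (μ x) (μ y)) = pimp (μ x) (μ y) ∧
    μ (plimp (μ x) (μ y)) = plimp (μ x) (μ y)) ∧
  (∀ x y : A, μ (μ x ⊓ μ y) = μ x ⊓ μ y)

section Aux

variable {A : Type*} [PseudoEqualityAlgebra A]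

lemma le_pimp (x y : A) : y ≤ pimp x y := by
  have h := A5a y ⊤ x
  rw [sim_top, top_inf_eq] at h
  simpa [pimp, inf_comm] using h

lemma le_plimp (x y : A) : y ≤ plimp x y := by
  have h := A5b ⊤ y x
  rw [top_bsim, top_inf_eq] at h
  simpa [plimp, inf_comm] using h

lemma le_bsim_sim (x z : A) : x ≤ bsim (sim z x) z := by
  have h := A6a x ⊤ z
  rwa [sim_top, sim_top] at h

lemma le_sim_bsim (y z : A) : y ≤ sim z (bsim y z) := by
  have h := A6b ⊤ y z
  rwa [top_bsim, top_bsim] at h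

/-- `y ≤ (y → x) ⇝ x`. -/
lemma le_plimp_pimp (x y : A) : y ≤ plimp (pimp y x) x := by
  have hxw : x ≤ pimp y x := le_pimp y x
  have h1 : y ≤ bsim (sim (y ⊓ x) y) (y ⊓ x) := le_bsim_sim y (y ⊓ x)
  have h2 : bsim (sim (y ⊓ x) y) (y ⊓ x) ≤ bsim (sim (y ⊓ x) y) x :=
    A4c (y ⊓ x) x (sim (y ⊓ x) y) inf_le_right hxw
  have : plimp (pimp y x) x = bsim (sim (y ⊓ x) y) x := by
    rw [plimp, inf_eq_right.mpr hxw]; rfl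
  rw [this]
  exact le_trans h1 h2

/-- `y ≤ (y ⇝ x) → x`. -/
lemma le_pimp_plimp (x y : A) : y ≤ pimp (plimp y x) x := by
  have hxw : x ≤ plimp y x := le_plimp y x
  have h1 : y ≤ sim (y ⊓ x) (bsim y (y ⊓ x)) := le_sim_bsim y (y ⊓ x)
  have h2 : sim (y ⊓ x) (bsim y (y ⊓ x)) ≤ sim x (bsim y (y ⊓ x)) :=
    A4a (y ⊓ x) x (bsim y (y ⊓ x)) inf_le_right hxw
  have : pimp (plimp y x) x = sim x (bsim y (y ⊓ x)) := by
    rw [pimp, inf_eq_right.mpr hxw]; rfl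
  rw [this]
  exact le_trans h1 h2

end Aux

/-- Theorem 6.12: every internal state of type I (resp. type II) on a pseudo equality
algebra `A` is an internal state of type I (resp. type II) on its associated
pseudo BCK(pC)-meet-semilattice `Ψ(A)`. -/
theorem stmt16 {A : Type*} [PseudoEqualityAlgebra A] (σ : A → A) :
    (IsInternalStateI σ → IsSBStateI σ) ∧ (IsInternalStateII σ → IsSBStateII σ) := by
  constructor
  · rintro ⟨h1, h2, h3, h4⟩
    refine ⟨h1, ?_, ?_, h4⟩
    · intro x y
      constructor
      · -- σ(x → y) = σ((x→y)⇝y) → σ y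
        have hyu : y ≤ pimp x y := le_pimp x y
        have hplimp : plimp (pimp x y) y = bsim (pimp x y) y := by
          rw [plimp, inf_eq_right.mpr hyu]
        have hst : σ y ≤ σ (plimp (pimp x y) y) := h1 _ _ (le_plimp (pimp x y) y)
        rw [hplimp] at hst ⊢
        simp only [pimp, plimp] at hst ⊢
        rw [inf_eq_right.mpr hst]
        exact (h2 x y).1
      · -- σ(x ⇝ y) = σ((x⇝y)→y) ⇝ σ y
        have hyv : y ≤ plimp x y := le_plimp x y
        have hpimp : pimp (plimp x y) y = sim y (plimp x y) := by
          rw [pimp, inf_eq_right.mpr hyv]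
        have hst : σ y ≤ σ (pimp (plimp x y) y) := h1 _ _ (le_pimp (plimp x y) y)
        rw [hpimp] at hst ⊢
        simp only [pimp, plimp] at hst ⊢
        rw [inf_eq_right.mpr hst]
        exact (h2 x y).2
    · intro x y
      have hinf : σ x ⊓ σ y = σ (σ x ⊓ σ y) := (h4 x y).symm
      constructor
      · rw [pimp, hinf]
        exact (h3 (σ x ⊓ σ y) x).1
      · rw [plimp, hinf]
        exact (h3 x (σ x ⊓ σ y)).2
  · rintro ⟨h1, h2, h3, h4⟩
    refine ⟨h1, ?_, ?_, h4⟩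
    · intro x y
      constructor
      · -- σ(x → y) = σ((y→x)⇝x) → σ y
        have hxw : x ≤ pimp y x := le_pimp y x
        have hplimp : plimp (pimp y x) x = bsim (sim (x ⊓ y) y) x := by
          rw [plimp, inf_eq_right.mpr hxw, pimp, inf_comm]
        have hst : σ y ≤ σ (plimp (pimp y x) x) := h1 _ _ (le_plimp_pimp x y)
        rw [hplimp] at hst ⊢
        simp only [pimp, plimp] at hst ⊢
        rw [inf_eq_right.mpr hst]
        exact (h2 x y).1
      · -- σ(x ⇝ y) = σ((y⇝x)→x) ⇝ σ y
        have hxw : x ≤ plimp y x := le_plimp y x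
        have hpimp : pimp (plimp y x) x = sim x (bsim y (x ⊓ y)) := by
          rw [pimp, inf_eq_right.mpr hxw, plimp, inf_comm]
        have hst : σ y ≤ σ (pimp (plimp y x) x) := h1 _ _ (le_pimp_plimp x y)
        rw [hpimp] at hst ⊢
        simp only [pimp, plimp] at hst ⊢
        rw [inf_eq_right.mpr hst]
        exact (h2 x y).2
    · intro x y
      have hinf : σ x ⊓ σ y = σ (σ x ⊓ σ y) := (h4 x y).symm
      constructor
      · rw [pimp, hinf]
        exact (h3 (σ x ⊓ σ y) x).1
      · rw [plimp, hinf]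
        exact (h3 x (σ x ⊓ σ y)).2
end

section
/- Let (A, ∧, ∼, ∽, a, 1) be a pointed a-compatible pseudo equality algebra, let Reg_a(A) = {x ∈ A : x^{∼a ∽a} = x^{∽a ∼a} = x} be the set of a-regular elements, and let σ: A → A be a map with σ(Reg_a(A)) ⊆ Reg_a(A), σ(a) = a, which is a state-morphism operator on Reg_a(A) (i.e., for all x, y ∈ Reg_a(A): σ(x ∼ y) = σ(x) ∼ σ(y), σ(x ∽ y) = σ(x) ∽ σ(y), σ(x∧y) = σ(x) ∧ σ(y), and σ(σ(x)) = σ(x)). Then the map σ̃: A → A defined by σ̃(x) = σ(x^{∼a ∽a}) is a state-morphism operator on A, and σ̃(x) = σ(x) for every x ∈ Reg_a(A). -/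
open PseudoEqualityAlgebra

/-- The set of `a`-regular elements of a pointed pseudo equality algebra:
those `x` with `x^{∼a ∽a} = x^{∽a ∼a} = x`, where `x^{∼a} = a ∼ x`, `x^{∽a} = x ∽ a`. -/
def RegSet {A : Type*} [PseudoEqualityAlgebra A] (a : A) : Set A :=
  {x : A | bsim (sim a x) a = x ∧ sim a (bsim x a) = x}

/-- Theorem 7.11: let `(A, ∧, ∼, ∽, a, 1)` be a pointed `a`-compatible pseudo equality
algebra and let `σ` map `Reg_a(A)` into itself with `σ(a) = a` and be a state-morphism
operator on `Reg_a(A)`. Then `σ̃(x) = σ(x^{∼a ∽a})` is a state-morphism operator on `A`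
whose restriction to `Reg_a(A)` is `σ`. -/
theorem stmt19 {A : Type*} [PseudoEqualityAlgebra A] (a : A)
    (hgood : ∀ x : A, bsim (sim a x) a = sim a (bsim x a))
    (hC1 : ∀ x y : A,
      bsim (sim a (sim x y)) a = sim (bsim (sim a x) a) (bsim (sim a y) a))
    (hC2 : ∀ x y : A,
      bsim (sim a (bsim x y)) a = bsim (bsim (sim a x) a) (bsim (sim a y) a))
    (hC3 : ∀ x y : A,
      bsim (sim a (x ⊓ y)) a = bsim (sim a x) a ⊓ bsim (sim a y) a)
    (hC4a : ∀ x : A, sim a (bsim (sim a x) a) = sim a x)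
    (hC4b : ∀ x : A, bsim (sim a (bsim x a)) a = bsim x a)
    (σ : A → A)
    (hmaps : ∀ x ∈ RegSet a, σ x ∈ RegSet a)
    (hσa : σ a = a)
    (hSM1 : ∀ x ∈ RegSet a, ∀ y ∈ RegSet a, σ (sim x y) = sim (σ x) (σ y))
    (hSM2 : ∀ x ∈ RegSet a, ∀ y ∈ RegSet a, σ (bsim x y) = bsim (σ x) (σ y))
    (hSM3 : ∀ x ∈ RegSet a, ∀ y ∈ RegSet a, σ (x ⊓ y) = σ x ⊓ σ y)
    (hSM4 : ∀ x ∈ RegSet a, σ (σ x) = σ x) :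
    (∀ x y : A,
        σ (bsim (sim a (sim x y)) a) =
          sim (σ (bsim (sim a x) a)) (σ (bsim (sim a y) a))) ∧
    (∀ x y : A,
        σ (bsim (sim a (bsim x y)) a) =
          bsim (σ (bsim (sim a x) a)) (σ (bsim (sim a y) a))) ∧
    (∀ x y : A,
        σ (bsim (sim a (x ⊓ y)) a) = σ (bsim (sim a x) a) ⊓ σ (bsim (sim a y) a)) ∧
    (∀ x : A,
        σ (bsim (sim a (σ (bsim (sim a x) a))) a) = σ (bsim (sim a x) a)) ∧
    (∀ x ∈ RegSet a, σ (bsim (sim a x) a) = σ x) := by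
  have hreg : ∀ x : A, bsim (sim a x) a ∈ RegSet a := by
    intro x
    constructor
    · rw [hC4a]
    · rw [hgood x, hC4b, ← hgood x]
  refine ⟨?_, ?_, ?_, ?_, ?_⟩
  · intro x y; rw [hC1, hSM1 _ (hreg x) _ (hreg y)]
  · intro x y; rw [hC2, hSM2 _ (hreg x) _ (hreg y)]
  · intro x y; rw [hC3, hSM3 _ (hreg x) _ (hreg y)]
  · intro x
    rw [(hmaps _ (hreg x)).1, hSM4 _ (hreg x)]
  · intro x hx; rw [hx.1]
end
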